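/- Let 𝒮 be a set of 2×2 complex unitary matrices containing the identity 1 and the matrix XZ = !![0, -1; 1, 0], such that for all U, V ∈ 𝒮 the product U†V is either symmetric or skew-symmetric. Then there exists a real rotation matrix W = !![cos α, -sin α; sin α, cos α] (for some α ∈ ℝ) such that every element of W† 𝒮 W is a unit-modulus complex scalar multiple of one of the four Pauli-type matrices 1, X, Z, XZ. -/

import Mathlib

open Matrix

/-- The Pauli gate `X = !![0, 1; 1, 0]`. -/
def PX : Matrix (Fin 2) (Fin 2) ℂ := !![0, 1; 1, 0]

/-- The Pauli gate `Z = !![1, 0; 0, -1]`. -/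
def PZ : Matrix (Fin 2) (Fin 2) ℂ := !![1, 0; 0, -1]

/-- The Pauli-type gate `XZ = !![0, -1; 1, 0]`. -/
def PXZ : Matrix (Fin 2) (Fin 2) ℂ := !![0, -1; 1, 0]

/-- A real rotation matrix by angle `α`, viewed as a complex `2×2` matrix. -/
noncomputable def Wrot (α : ℝ) : Matrix (Fin 2) (Fin 2) ℂ :=
  !![(Real.cos α : ℂ), -(Real.sin α : ℂ); (Real.sin α : ℂ), (Real.cos α : ℂ)]

/-- A "reflection"-type real symmetric matrix, viewed as complex. -/
def Rf (x y : ℝ) : Matrix (Fin 2) (Fin 2) ℂ := !![(x:ℂ), y; y, -x]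

lemma Rf_neg (x y : ℝ) : Rf (-x) (-y) = (-1 : ℂ) • Rf x y := by
  ext i j; fin_cases i <;> fin_cases j <;> simp [Rf]

lemma conjZ' (c s x y : ℝ) (h1 : s ^ 2 + c ^ 2 = 1) (hx : c ^ 2 - s ^ 2 = x)
    (hy : 2 * c * s = y) :
    (!![(c:ℂ), -(s:ℂ); (s:ℂ), (c:ℂ)])ᴴ * Rf x y * !![(c:ℂ), -(s:ℂ); (s:ℂ), (c:ℂ)] = PZ := by
  subst hx hy
  ext i j; fin_cases i <;> fin_cases j <;>
  · simp [Rf, PZ, Matrix.mul_apply, Fin.sum_univ_two, Matrix.conjTranspose_apply,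
      Complex.conj_ofReal]
    norm_cast
    norm_num
    have h1' : (s:ℂ)^2 + (c:ℂ)^2 = 1 := by exact_mod_cast h1
    try first
    | ring1
    | linear_combination (c^2+s^2+1)*h1
    | linear_combination (-(c^2+s^2)-1)*h1
    | linear_combination ((c:ℂ)^2+(s:ℂ)^2+1)*h1'
    | linear_combination (-((c:ℂ)^2+(s:ℂ)^2)-1)*h1'

lemma conjX' (c s x y : ℝ) (h1 : s ^ 2 + c ^ 2 = 1) (hx : c ^ 2 - s ^ 2 = x)
    (hy : 2 * c * s = y) :
    (!![(c:ℂ), -(s:ℂ); (s:ℂ), (c:ℂ)])ᴴ * Rf (-y) x * !![(c:ℂ), -(s:ℂ); (s:ℂ), (c:ℂ)] = PX := by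
  subst hx hy
  ext i j; fin_cases i <;> fin_cases j <;>
  · simp [Rf, PX, Matrix.mul_apply, Fin.sum_univ_two, Matrix.conjTranspose_apply,
      Complex.conj_ofReal]
    norm_cast
    norm_num
    have h1' : (s:ℂ)^2 + (c:ℂ)^2 = 1 := by exact_mod_cast h1
    try first
    | ring1
    | linear_combination (c^2+s^2+1)*h1
    | linear_combination (-(c^2+s^2)-1)*h1
    | linear_combination ((c:ℂ)^2+(s:ℂ)^2+1)*h1'
    | linear_combination (-((c:ℂ)^2+(s:ℂ)^2)-1)*h1'

lemma WW' (c s : ℝ) (h1 : s ^ 2 + c ^ 2 = 1) :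
    (!![(c:ℂ), -(s:ℂ); (s:ℂ), (c:ℂ)])ᴴ * !![(c:ℂ), -(s:ℂ); (s:ℂ), (c:ℂ)] = 1 := by
  ext i j; fin_cases i <;> fin_cases j <;>
  · simp [Matrix.mul_apply, Fin.sum_univ_two, Matrix.conjTranspose_apply,
      Complex.conj_ofReal, Matrix.one_apply]
    norm_cast
    norm_num
    try first | ring1 | linear_combination h1 | linear_combination -h1

lemma WXZ' (c s : ℝ) (h1 : s ^ 2 + c ^ 2 = 1) :
    (!![(c:ℂ), -(s:ℂ); (s:ℂ), (c:ℂ)])ᴴ * PXZ * !![(c:ℂ), -(s:ℂ); (s:ℂ), (c:ℂ)] = PXZ := by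
  ext i j; fin_cases i <;> fin_cases j <;>
  · simp [PXZ, Matrix.mul_apply, Fin.sum_univ_two, Matrix.conjTranspose_apply,
      Complex.conj_ofReal]
    norm_cast
    norm_num
    try first | ring1 | linear_combination h1 | linear_combination -h1

lemma abs_one_of (z : ℂ) (h : z * (starRingEnd ℂ) z = 1) : ‖z‖ = 1 := by
  have h' : ((Complex.normSq z : ℂ)) = 1 := by rw [← Complex.mul_conj]; exact h
  have h'' : Complex.normSq z = 1 := by exact_mod_cast h'
  have := Complex.sq_norm z
  nlinarith [norm_nonneg z]

lemma phase (a b : ℂ) (h1 : a * (starRingEnd ℂ) a + b * (starRingEnd ℂ) b = 1)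
    (h2 : a * (starRingEnd ℂ) b = b * (starRingEnd ℂ) a) :
    ∃ z : ℂ, ∃ x y : ℝ, ‖z‖ = 1 ∧ x ^ 2 + y ^ 2 = 1 ∧ a = z * x ∧ b = z * y := by
  have hn : Complex.normSq a + Complex.normSq b = 1 := by
    have h : ((Complex.normSq a : ℂ)) + (Complex.normSq b : ℂ) = 1 := by
      rw [← Complex.mul_conj, ← Complex.mul_conj]; exact h1
    exact_mod_cast h
  by_cases ha : a = 0
  · subst ha
    have hb : ‖b‖ = 1 := by
      have := Complex.sq_norm b
      simp [Complex.normSq_zero] at hn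
      nlinarith [norm_nonneg b]
    exact ⟨b, 0, 1, hb, by norm_num, by simp, by simp⟩
  · set r := ‖a‖ with hr
    have hrpos : 0 < r := norm_pos_iff.mpr ha
    have hrne : (r : ℂ) ≠ 0 := by exact_mod_cast hrpos.ne'
    set w := (starRingEnd ℂ) a * b with hw
    have hwconj : (starRingEnd ℂ) w = w := by
      rw [hw, _root_.map_mul, Complex.conj_conj]
      linear_combination h2
    have hwre : (w.re : ℂ) = w := Complex.conj_eq_iff_re.mp hwconj
    have hr2 : ((r : ℂ)) * r = a * (starRingEnd ℂ) a := by
      rw [Complex.mul_conj]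
      norm_cast
      rw [← Complex.sq_norm]
      ring
    have him : w.im = 0 := by
      have := congrArg Complex.im hwre
      simpa using this.symm
    have hw2 : w.re ^ 2 = Complex.normSq a * Complex.normSq b := by
      have h3 : Complex.normSq w = Complex.normSq a * Complex.normSq b := by
        rw [hw, _root_.map_mul, Complex.normSq_conj]
      rw [Complex.normSq_apply, him] at h3
      nlinarith [h3]
    have hra : r ^ 2 = Complex.normSq a := Complex.sq_norm a
    refine ⟨a / r, r, w.re / r, ?_, ?_, ?_, ?_⟩
    · rw [norm_div]
      simp only [Complex.norm_real, Real.norm_eq_abs, abs_of_pos hrpos, ← hr]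
      field_simp
    · field_simp
      nlinarith [hw2, hra, hn, hrpos, Complex.normSq_nonneg b]
    · field_simp
    · push_cast
      rw [hwre, hw]
      field_simp
      linear_combination b * hr2

lemma classify (U : Matrix (Fin 2) (Fin 2) ℂ) (hU : U * Uᴴ = 1)
    (hs1 : Uᵀ = U ∨ Uᵀ = -U)
    (hs2 : (PXZᴴ * U)ᵀ = PXZᴴ * U ∨ (PXZᴴ * U)ᵀ = -(PXZᴴ * U)) :
    (∃ z : ℂ, ‖z‖ = 1 ∧ U = z • (1 : Matrix (Fin 2) (Fin 2) ℂ)) ∨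
    (∃ z : ℂ, ‖z‖ = 1 ∧ U = z • PXZ) ∨
    (∃ z : ℂ, ∃ x y : ℝ, ‖z‖ = 1 ∧ x ^ 2 + y ^ 2 = 1 ∧ U = z • Rf x y) := by
  have e00 := congrFun (congrFun hU 0) 0
  have e01 := congrFun (congrFun hU 0) 1
  have e11 := congrFun (congrFun hU 1) 1
  simp [Matrix.mul_apply, Fin.sum_univ_two, Matrix.conjTranspose_apply, Matrix.one_apply] at e00 e01 e11
  rcases hs1 with hsym | hskew
  · have hba := congrFun (congrFun hsym 1) 0
    simp [Matrix.transpose_apply] at hba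
    rcases hs2 with hs | hs
    · -- reflection
      have hd := congrFun (congrFun hs 1) 0
      simp [PXZ, Matrix.mul_apply, Fin.sum_univ_two, Matrix.transpose_apply,
        Matrix.conjTranspose_apply] at hd
      rw [← hba, hd, map_neg] at e01
      have h2 : U 0 0 * (starRingEnd ℂ) (U 0 1) = U 0 1 * (starRingEnd ℂ) (U 0 0) := by
        linear_combination e01
      obtain ⟨z, x, y, hz, hxy, hax, hby⟩ := phase (U 0 0) (U 0 1) e00 h2
      refine Or.inr (Or.inr ⟨z, x, y, hz, hxy, ?_⟩)
      rw [Matrix.eta_fin_two U, hd, ← hba, hax, hby]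
      ext i j
      fin_cases i <;> fin_cases j <;> simp [Rf, mul_neg]
    · -- scalar
      have h00 := congrFun (congrFun hs 0) 0
      have h01 := congrFun (congrFun hs 1) 0
      simp [PXZ, Matrix.mul_apply, Fin.sum_univ_two, Matrix.transpose_apply,
        Matrix.conjTranspose_apply] at h00 h01
      have hb0 : U 1 0 = 0 := by
        have h2 : (2:ℂ) * U 1 0 = 0 := by linear_combination h00
        simpa using h2
      have hc0 : U 0 1 = 0 := hba.trans hb0
      rw [hc0] at e00
      simp at e00
      refine Or.inl ⟨U 0 0, abs_one_of _ e00, ?_⟩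
      rw [Matrix.eta_fin_two U, h01, hb0, hc0]
      ext i j
      fin_cases i <;> fin_cases j <;> simp [Matrix.one_apply]
  · -- skew
    have k00 := congrFun (congrFun hskew 0) 0
    have k11 := congrFun (congrFun hskew 1) 1
    have k01 := congrFun (congrFun hskew 1) 0
    simp [Matrix.transpose_apply, Matrix.neg_apply] at k00 k11 k01
    have ha0 : U 0 0 = 0 := by
      have h2 : (2:ℂ) * U 0 0 = 0 := by linear_combination k00
      simpa using h2
    have hd0 : U 1 1 = 0 := by
      have h2 : (2:ℂ) * U 1 1 = 0 := by linear_combination k11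
      simpa using h2
    rw [hd0] at e11
    simp at e11
    refine Or.inr (Or.inl ⟨U 1 0, abs_one_of _ e11, ?_⟩)
    rw [Matrix.eta_fin_two U, ha0, hd0, k01]
    ext i j
    fin_cases i <;> fin_cases j <;> simp [PXZ]

lemma para (x y x₀ y₀ : ℝ) (h : x^2+y^2=1) (h0 : x₀^2+y₀^2=1) (hc : y₀*x = x₀*y) :
    (x = x₀ ∧ y = y₀) ∨ (x = -x₀ ∧ y = -y₀) := by
  have hd : (x*x₀+y*y₀)*(x*x₀+y*y₀) = 1 := by nlinarith [hc]
  rcases mul_self_eq_one_iff.mp hd with h1 | h1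
  · exact Or.inl ⟨by nlinarith [sq_nonneg (x-x₀), sq_nonneg (y-y₀)],
      by nlinarith [sq_nonneg (x-x₀), sq_nonneg (y-y₀)]⟩
  · exact Or.inr ⟨by nlinarith [sq_nonneg (x+x₀), sq_nonneg (y+y₀)],
      by nlinarith [sq_nonneg (x+x₀), sq_nonneg (y+y₀)]⟩

lemma perp (x y x₀ y₀ : ℝ) (h : x^2+y^2=1) (h0 : x₀^2+y₀^2=1) (hc : x*x₀ + y*y₀ = 0) :
    (x = -y₀ ∧ y = x₀) ∨ (x = y₀ ∧ y = -x₀) := by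
  have hd : (x*y₀-y*x₀)*(x*y₀-y*x₀) = 1 := by nlinarith [hc]
  rcases mul_self_eq_one_iff.mp hd with h1 | h1
  · exact Or.inr ⟨by nlinarith [sq_nonneg (x-y₀), sq_nonneg (y+x₀)],
      by nlinarith [sq_nonneg (x-y₀), sq_nonneg (y+x₀)]⟩
  · exact Or.inl ⟨by nlinarith [sq_nonneg (x+y₀), sq_nonneg (y-x₀)],
      by nlinarith [sq_nonneg (x+y₀), sq_nonneg (y-x₀)]⟩

lemma coh (z₀ z : ℂ) (x₀ y₀ x y : ℝ) (hz₀ : z₀ ≠ 0) (hz : z ≠ 0)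
    (h0 : x₀^2 + y₀^2 = 1) (h : x^2+y^2 = 1)
    (hp : ((z₀ • Rf x₀ y₀)ᴴ * (z • Rf x y))ᵀ = (z₀ • Rf x₀ y₀)ᴴ * (z • Rf x y) ∨
          ((z₀ • Rf x₀ y₀)ᴴ * (z • Rf x y))ᵀ = -((z₀ • Rf x₀ y₀)ᴴ * (z • Rf x y))) :
    (x = x₀ ∧ y = y₀) ∨ (x = -x₀ ∧ y = -y₀) ∨ (x = -y₀ ∧ y = x₀) ∨ (x = y₀ ∧ y = -x₀) := by
  have hk : (starRingEnd ℂ) z₀ * z ≠ 0 :=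
    mul_ne_zero (by simpa using hz₀) hz
  rcases hp with hp | hp
  · have hE := congrFun (congrFun hp 1) 0
    simp [Rf, Matrix.mul_apply, Fin.sum_univ_two, Matrix.transpose_apply,
      Matrix.conjTranspose_apply, Matrix.smul_apply, smul_eq_mul, Complex.conj_ofReal] at hE
    have h2 : ((starRingEnd ℂ) z₀ * z) * (2*((x₀:ℂ)*y - (y₀:ℂ)*x)) = 0 := by
      linear_combination hE
    have h3 := (mul_eq_zero.mp h2).resolve_left hk
    have h4 : ((y₀*x : ℝ) : ℂ) = ((x₀*y : ℝ) : ℂ) := by push_cast; linear_combination -h3/2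
    have h5 : y₀*x = x₀*y := by exact_mod_cast h4
    rcases para x y x₀ y₀ h h0 h5 with h6 | h6
    · exact Or.inl h6
    · exact Or.inr (Or.inl h6)
  · have hE := congrFun (congrFun hp 0) 0
    simp [Rf, Matrix.mul_apply, Fin.sum_univ_two, Matrix.transpose_apply,
      Matrix.conjTranspose_apply, Matrix.smul_apply, smul_eq_mul, Complex.conj_ofReal,
      Matrix.neg_apply] at hE
    have h2 : ((starRingEnd ℂ) z₀ * z) * (2*((x₀:ℂ)*x + (y₀:ℂ)*y)) = 0 := by
      linear_combination hE
    have h3 := (mul_eq_zero.mp h2).resolve_left hk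
    have h4 : ((x*x₀ + y*y₀ : ℝ) : ℂ) = ((0:ℝ) : ℂ) := by push_cast; linear_combination h3/2
    have h5 : x*x₀ + y*y₀ = 0 := by exact_mod_cast h4
    rcases perp x y x₀ y₀ h h0 h5 with h6 | h6
    · exact Or.inr (Or.inr (Or.inl h6))
    · exact Or.inr (Or.inr (Or.inr h6))

/-- If `𝒮` is a set of `2×2` unitaries containing `1` and `XZ` such that `U†V` is symmetric
or skew-symmetric for all `U, V ∈ 𝒮`, then after conjugation by a suitable real rotation
every element of `𝒮` is a unit-modulus scalar multiple of one of `1, X, Z, XZ`. -/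
theorem stmt9 (S : Set (Matrix (Fin 2) (Fin 2) ℂ))
    (hS : ∀ U ∈ S, U ∈ Matrix.unitaryGroup (Fin 2) ℂ)
    (h1 : (1 : Matrix (Fin 2) (Fin 2) ℂ) ∈ S) (hXZ : PXZ ∈ S)
    (hprod : ∀ U ∈ S, ∀ V ∈ S, (Uᴴ * V)ᵀ = Uᴴ * V ∨ (Uᴴ * V)ᵀ = -(Uᴴ * V)) :
    ∃ α : ℝ, ∀ U ∈ S, ∃ z : ℂ, ‖z‖ = 1 ∧
      ((Wrot α)ᴴ * U * Wrot α = z • (1 : Matrix (Fin 2) (Fin 2) ℂ) ∨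
       (Wrot α)ᴴ * U * Wrot α = z • PX ∨
       (Wrot α)ᴴ * U * Wrot α = z • PZ ∨
       (Wrot α)ᴴ * U * Wrot α = z • PXZ) := by
  have hclass : ∀ U ∈ S,
      (∃ z : ℂ, ‖z‖ = 1 ∧ U = z • (1 : Matrix (Fin 2) (Fin 2) ℂ)) ∨
      (∃ z : ℂ, ‖z‖ = 1 ∧ U = z • PXZ) ∨
      (∃ z : ℂ, ∃ x y : ℝ, ‖z‖ = 1 ∧ x ^ 2 + y ^ 2 = 1 ∧ U = z • Rf x y) := by
    intro U hU
    apply classify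
    · have := (Matrix.mem_unitaryGroup_iff).mp (hS U hU)
      rwa [Matrix.star_eq_conjTranspose] at this
    · have := hprod 1 h1 U hU
      simpa using this
    · exact hprod PXZ hXZ U hU
  by_cases hex : ∃ V ∈ S, ∃ z : ℂ, ∃ x y : ℝ,
      ‖z‖ = 1 ∧ x ^ 2 + y ^ 2 = 1 ∧ V = z • Rf x y
  case neg =>
    refine ⟨0, fun U hU => ?_⟩
    have hW : Wrot 0 = 1 := by
      ext i j; fin_cases i <;> fin_cases j <;> simp [Wrot, Matrix.one_apply]
    rcases hclass U hU with ⟨z, hz, hEq⟩ | ⟨z, hz, hEq⟩ | hrefl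
    · exact ⟨z, hz, Or.inl (by rw [hW, hEq]; simp)⟩
    · exact ⟨z, hz, Or.inr (Or.inr (Or.inr (by rw [hW, hEq]; simp)))⟩
    · exact absurd ⟨U, hU, hrefl⟩ hex
  case pos =>
    obtain ⟨V₀, hV₀S, z₀, x₀, y₀, hz₀, hxy₀, hV₀⟩ := hex
    set θ := Complex.arg (x₀ + y₀ * Complex.I) with hθ
    have habs : ‖(x₀ : ℂ) + y₀ * Complex.I‖ = 1 := by
      have hns : Complex.normSq ((x₀:ℂ) + (y₀:ℂ) * Complex.I) = 1 := by
        rw [Complex.normSq_add_mul_I]; exact hxy₀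
      have h' := Complex.sq_norm ((x₀:ℂ) + (y₀:ℂ)*Complex.I)
      nlinarith [norm_nonneg ((x₀:ℂ)+(y₀:ℂ)*Complex.I)]
    have hne : ((x₀:ℂ) + (y₀:ℂ)*Complex.I) ≠ 0 := by
      intro h
      rw [h] at habs
      simp at habs
    have hcos : Real.cos θ = x₀ := by
      rw [hθ, Complex.cos_arg hne, habs]
      simp
    have hsin : Real.sin θ = y₀ := by
      rw [hθ, Complex.sin_arg, habs]
      simp
    refine ⟨θ/2, fun U hU => ?_⟩
    set c := Real.cos (θ/2) with hc
    set s := Real.sin (θ/2) with hs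
    have h1cs : s^2 + c^2 = 1 := Real.sin_sq_add_cos_sq _
    have hhalf : 2*(θ/2) = θ := by ring
    have hx0 : c^2 - s^2 = x₀ := by
      have h2 := Real.cos_two_mul (θ/2)
      rw [hhalf, hcos] at h2
      rw [← hc, ← hs] at *
      nlinarith [h1cs, h2]
    have hy0 : 2*c*s = y₀ := by
      have h2 := Real.sin_two_mul (θ/2)
      rw [hhalf, hsin] at h2
      rw [h2, ← hc, ← hs]
      ring
    have hWeq : Wrot (θ/2) = !![(c:ℂ), -(s:ℂ); (s:ℂ), (c:ℂ)] := rfl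
    have hz₀ne : z₀ ≠ 0 := by
      intro h; rw [h] at hz₀; simp at hz₀
    rcases hclass U hU with ⟨z, hz, hEq⟩ | ⟨z, hz, hEq⟩ | ⟨z, x, y, hz, hxy, hEq⟩
    · refine ⟨z, hz, Or.inl ?_⟩
      rw [hEq, Matrix.mul_smul, Matrix.smul_mul, mul_one, hWeq, WW' c s h1cs]
    · refine ⟨z, hz, Or.inr (Or.inr (Or.inr ?_))⟩
      rw [hEq, Matrix.mul_smul, Matrix.smul_mul, hWeq, WXZ' c s h1cs]
    · have hzne : z ≠ 0 := by
        intro h; rw [h] at hz; simp at hz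
      have hp := hprod V₀ hV₀S U hU
      rw [hV₀, hEq] at hp
      rcases coh z₀ z x₀ y₀ x y hz₀ne hzne hxy₀ hxy hp with ⟨hxx,hyy⟩|⟨hxx,hyy⟩|⟨hxx,hyy⟩|⟨hxx,hyy⟩
      · refine ⟨z, hz, Or.inr (Or.inr (Or.inl ?_))⟩
        rw [hEq, hxx, hyy, Matrix.mul_smul, Matrix.smul_mul, hWeq,
          conjZ' c s x₀ y₀ h1cs hx0 hy0]
      · refine ⟨-z, by simpa using hz, Or.inr (Or.inr (Or.inl ?_))⟩
        rw [hEq, hxx, hyy, Rf_neg, smul_smul, Matrix.mul_smul, Matrix.smul_mul, hWeq,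
          conjZ' c s x₀ y₀ h1cs hx0 hy0]
        congr 1
        ring
      · refine ⟨z, hz, Or.inr (Or.inl ?_)⟩
        rw [hEq, hxx, hyy, Matrix.mul_smul, Matrix.smul_mul, hWeq,
          conjX' c s x₀ y₀ h1cs hx0 hy0]
      · refine ⟨-z, by simpa using hz, Or.inr (Or.inl ?_)⟩
        have hRf : Rf y₀ (-x₀) = (-1 : ℂ) • Rf (-y₀) x₀ := by
          have := Rf_neg (-y₀) x₀
          simpa using this
        rw [hEq, hxx, hyy, hRf, smul_smul, Matrix.mul_smul, Matrix.smul_mul, hWeq,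
          conjX' c s x₀ y₀ h1cs hx0 hy0]
        congr 1
        ring
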